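/- arXiv:1410.2282 — 7 statements merged into one kernel-verified Lean document; each statement's English description precedes it below -/
import Mathlib

section
/- Let h be a positive solution of Lh = −λh on ℝ with h(0) = 1, and suppose the scale integral B := ∫_{−∞}^0 (1/h²(y))·exp(−∫₀^y 2k(z)/σ²(z) dz) dy is finite and D := ∫₀^∞ (1/h²(y))·exp(−∫₀^y 2k(z)/σ²(z) dz) dy = ∞. Then the general solution of Lh = −λh normalized to value 1 at 0 is h_c(x) = h(x)·((1−c) + (c/B)·S((−∞,x])) where S is the scale measure with respect to h, and h_c is positive on ℝ if and only if 0 ≤ c ≤ 1. -/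
open Real MeasureTheory

private lemma c2_aux {f : ℝ → ℝ} (hf : ContDiff ℝ 2 f) :
    Differentiable ℝ f ∧ Differentiable ℝ (deriv f) := by
  rw [show (2 : WithTop ℕ∞) = 1 + 1 by norm_num, contDiff_succ_iff_deriv] at hf
  exact ⟨hf.1, hf.2.2.differentiable one_ne_zero⟩

theorem stmt2 (σ k r : ℝ → ℝ) (hσ : ContDiff ℝ 1 σ) (hk : ContDiff ℝ 1 k)
    (hr : ContDiff ℝ 1 r) (hσpos : ∀ x, 0 < σ x)
    (lam : ℝ) (h : ℝ → ℝ) (hh : ContDiff ℝ 2 h) (hpos : ∀ x, 0 < h x) (h01 : h 0 = 1)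
    (hode : ∀ x,
      (1/2) * σ x ^ 2 * deriv (deriv h) x + k x * deriv h x - r x * h x = -lam * h x)
    (w : ℝ → ℝ)
    (hw : ∀ y, w y = (1 / (h y) ^ 2) *
      Real.exp (-∫ z in (0:ℝ)..y, 2 * k z / σ z ^ 2))
    (hB : IntegrableOn w (Set.Iic 0) volume)
    (hD : ¬ IntegrableOn w (Set.Ici 0) volume)
    (B : ℝ) (hBval : B = ∫ y in Set.Iic (0:ℝ), w y) :
    (∀ g : ℝ → ℝ, ContDiff ℝ 2 g →
      (∀ x, (1/2) * σ x ^ 2 * deriv (deriv g) x + k x * deriv g x - r x * g x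
          = -lam * g x) →
      g 0 = 1 →
      ∃ c : ℝ, ∀ x, g x = h x * ((1 - c) + (c / B) * ∫ y in Set.Iic x, w y)) ∧
    (∀ c : ℝ,
      (∀ x, 0 < h x * ((1 - c) + (c / B) * ∫ y in Set.Iic x, w y)) ↔
      (0 ≤ c ∧ c ≤ 1)) := by
  have hσ2 : ∀ x, σ x ^ 2 ≠ 0 := fun x => pow_ne_zero _ (hσpos x).ne'
  set q : ℝ → ℝ := fun z => 2 * k z / σ z ^ 2 with hq
  have hqc : Continuous q :=
    (continuous_const.mul hk.continuous).div (hσ.continuous.pow 2) hσ2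
  set P : ℝ → ℝ := fun x => ∫ z in (0:ℝ)..x, q z with hPdef
  have hP : ∀ x, HasDerivAt P (q x) x := fun x =>
    intervalIntegral.integral_hasDerivAt_right (hqc.intervalIntegrable _ _)
      hqc.stronglyMeasurable.stronglyMeasurableAtFilter hqc.continuousAt
  have hPc : Continuous P := by
    have : Differentiable ℝ P := fun x => (hP x).differentiableAt
    exact this.continuous
  have hd := c2_aux hh
  have hwc : Continuous w := by
    have : w = fun y => (1 / (h y) ^ 2) * Real.exp (-P y) := funext hw
    rw [this]
    exact (continuous_const.div (hh.continuous.pow 2)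
      (fun y => pow_ne_zero 2 (hpos y).ne')).mul (Real.continuous_exp.comp hPc.neg)
  have hwpos : ∀ y, 0 < w y := by
    intro y
    rw [hw]
    have := hpos y
    positivity
  have hIntIic : ∀ x, IntegrableOn w (Set.Iic x) volume := by
    intro x
    rcases le_or_gt x 0 with hx | hx
    · exact hB.mono_set (Set.Iic_subset_Iic.2 hx)
    · rw [← Set.Iic_union_Ioc_eq_Iic hx.le]
      exact hB.union (hwc.integrableOn_Ioc)
  set J : ℝ → ℝ := fun x => ∫ y in Set.Iic x, w y with hJdef
  set A : ℝ → ℝ := fun x => ∫ t in (0:ℝ)..x, w t with hAdef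
  have hJ : ∀ x, J x - B = A x := by
    intro x
    rw [hBval]
    exact intervalIntegral.integral_Iic_sub_Iic (hIntIic 0) (hIntIic x)
  have hJpos : ∀ x, 0 < J x := by
    intro x
    rw [hJdef]
    rw [setIntegral_pos_iff_support_of_nonneg_ae
      (Filter.Eventually.of_forall fun y => (hwpos y).le) (hIntIic x)]
    have hsupp : Function.support w = Set.univ :=
      Set.eq_univ_iff_forall.2 fun y => (hwpos y).ne'
    rw [hsupp, Set.univ_inter, Real.volume_Iic]
    exact ENNReal.zero_lt_top
  have hBpos : 0 < B := by
    have := hJpos 0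
    simpa [hJdef, ← hBval] using this
  have hA : ∀ x, HasDerivAt A (w x) x := fun x =>
    intervalIntegral.integral_hasDerivAt_right (hwc.intervalIntegrable _ _)
      hwc.stronglyMeasurable.stronglyMeasurableAtFilter hwc.continuousAt
  constructor
  · -- Part 1
    intro g hg hodeg hg0
    have hgd := c2_aux hg
    set W : ℝ → ℝ := fun x => deriv g x * h x - g x * deriv h x with hWdef
    set E : ℝ → ℝ := fun x => Real.exp (P x) with hEdef
    have hEpos : ∀ x, 0 < E x := fun x => Real.exp_pos _
    have hE : ∀ x, HasDerivAt E (q x * E x) x := by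
      intro x
      have := (hP x).exp
      simpa [hEdef, mul_comm] using this
    have hW : ∀ x, HasDerivAt W
        (deriv (deriv g) x * h x - g x * deriv (deriv h) x) x := by
      intro x
      have h1 := ((hgd.2 x).hasDerivAt.mul (hd.1 x).hasDerivAt).sub
        ((hgd.1 x).hasDerivAt.mul (hd.2 x).hasDerivAt)
      refine h1.congr_deriv ?_
      ring
    have hF : ∀ x, HasDerivAt (fun x => W x * E x) 0 x := by
      intro x
      have h1 := (hW x).mul (hE x)
      refine h1.congr_deriv ?_
      have key : deriv (deriv g) x * h x - g x * deriv (deriv h) x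
          = -(q x) * W x := by
        have e1' : deriv (deriv g) x
            = (2 * ((r x - lam) * g x - k x * deriv g x)) / σ x ^ 2 := by
          rw [eq_div_iff (hσ2 x)]
          linear_combination 2 * hodeg x
        have e2' : deriv (deriv h) x
            = (2 * ((r x - lam) * h x - k x * deriv h x)) / σ x ^ 2 := by
          rw [eq_div_iff (hσ2 x)]
          linear_combination 2 * hode x
        rw [e1', e2', hWdef, hq]
        field_simp
        ring
      rw [key]
      ring
    have hFconst : ∀ x, W x * E x = W 0 := by
      intro x
      have hdiff : Differentiable ℝ (fun x => W x * E x) :=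
        fun x => (hF x).differentiableAt
      have := is_const_of_deriv_eq_zero hdiff (fun x => (hF x).deriv) x 0
      simpa [hEdef, hPdef, intervalIntegral.integral_same] using this
    have hu : ∀ x, HasDerivAt (fun x => g x / h x) (W 0 * w x) x := by
      intro x
      have h1 := ((hgd.1 x).hasDerivAt).div ((hd.1 x).hasDerivAt) (hpos x).ne'
      refine h1.congr_deriv ?_
      have hWx : W x = W 0 / E x := by
        rw [eq_div_iff (hEpos x).ne']; exact hFconst x
      have hwx : w x = 1 / (h x ^ 2 * E x) := by
        rw [hw, Real.exp_neg]
        rw [hEdef]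
        field_simp
        rfl
      have hWx' : deriv g x * h x - g x * deriv h x = W 0 / E x := hWx
      rw [hwx, hWx']
      field_simp
    have hG : ∀ x, g x / h x - W 0 * A x = 1 := by
      have hGd : ∀ x, HasDerivAt (fun x => g x / h x - W 0 * A x) 0 x := by
        intro x
        have h1 := (hu x).sub ((hA x).const_mul (W 0))
        exact h1.congr_deriv (sub_self _)
      intro x
      have hdiff : Differentiable ℝ (fun x => g x / h x - W 0 * A x) :=
        fun x => (hGd x).differentiableAt
      have := is_const_of_deriv_eq_zero hdiff (fun x => (hGd x).deriv) x 0
      rw [this]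
      simp [hAdef, intervalIntegral.integral_same, hg0, h01]
    refine ⟨W 0 * B, fun x => ?_⟩
    have hgx : g x = h x * (1 + W 0 * A x) := by
      have := hG x
      have hx := (hpos x).ne'
      field_simp at this
      linear_combination this
    have hJx : J x = B + A x := by linarith [hJ x]
    show g x = h x * ((1 - W 0 * B) + (W 0 * B / B) * J x)
    rw [hgx, hJx, mul_div_assoc, div_self hBpos.ne', mul_one]
    ring
  · -- Part 2
    intro c
    constructor
    · intro hp
      have hp' : ∀ x, 0 < (1 - c) + c / B * J x := by
        intro x
        have h1 := hp x
        nlinarith [hpos x, mul_pos (hpos x) (hp x)]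
      have hp'' : ∀ x, 0 < B * (1 - c) + c * J x := by
        intro x
        have h1 := mul_pos hBpos (hp' x)
        have h2 : B * ((1 - c) + c / B * J x) = B * (1 - c) + c * J x := by
          field_simp
        linarith [h2 ▸ h1]
      constructor
      · by_contra hc
        push_neg at hc
        apply hD
        rw [integrableOn_Ici_iff_integrableOn_Ioi]
        refine integrableOn_Ioi_of_intervalIntegral_norm_bounded
          (l := Filter.atTop) (B * (c - 1) / c - B) 0
          (fun i => hwc.integrableOn_Ioc) Filter.tendsto_id ?_
        apply Filter.Eventually.of_forall
        intro i
        have hnorm : (∫ x in (0:ℝ)..i, ‖w x‖) = A i := by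
          rw [hAdef]
          exact intervalIntegral.integral_congr fun s _ => abs_of_pos (hwpos s)
        show (∫ x in (0:ℝ)..(id i), ‖w x‖ ∂volume) ≤ B * (c - 1) / c - B
        rw [show (id i) = i from rfl, hnorm]
        have hJi : J i < B * (c - 1) / c := by
          rw [lt_div_iff_of_neg hc]
          nlinarith [hp'' i]
        linarith [hJ i]
      · by_contra hc
        push_neg at hc
        have hc0 : 0 < c := by linarith
        have hε : 0 < B * (c - 1) / c := div_pos (mul_pos hBpos (by linarith)) (by linarith)
        have hJε : ∀ x, B * (c - 1) / c < J x := by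
          intro x
          rw [div_lt_iff₀ hc0]
          nlinarith [hp'' x]
        have hmono : Monotone (fun n : ℕ => Set.Ioc (-(n:ℝ)) 0) := by
          intro m n hmn
          exact Set.Ioc_subset_Ioc_left (by exact_mod_cast neg_le_neg (Nat.cast_le.2 hmn))
        have hunion : (⋃ n : ℕ, Set.Ioc (-(n:ℝ)) 0) = Set.Iic 0 := by
          ext y
          simp only [Set.mem_iUnion, Set.mem_Ioc, Set.mem_Iic]
          constructor
          · rintro ⟨n, _, h2⟩
            exact h2
          · intro hy
            obtain ⟨n, hn⟩ := exists_nat_gt (-y)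
            exact ⟨n, by linarith, hy⟩
        have hint : IntegrableOn w (⋃ n : ℕ, Set.Ioc (-(n:ℝ)) 0) volume := by
          rw [hunion]; exact hB
        have htend := tendsto_setIntegral_of_monotone
          (fun n => measurableSet_Ioc) hmono hint
        rw [hunion, ← hBval] at htend
        have hev : ∀ᶠ n : ℕ in Filter.atTop,
            B - B * (c - 1) / c < ∫ y in Set.Ioc (-(n:ℝ)) 0, w y :=
          htend.eventually (eventually_gt_nhds (by linarith))
        obtain ⟨n, hn⟩ := hev.exists
        have hsplit : B - J (-(n:ℝ)) = ∫ y in Set.Ioc (-(n:ℝ)) 0, w y := by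
          have h1 := intervalIntegral.integral_Iic_sub_Iic (μ := volume) (f := w)
            (hIntIic (-(n:ℝ))) (hIntIic 0)
          rw [intervalIntegral.integral_of_le (neg_nonpos.2 (Nat.cast_nonneg n))] at h1
          rw [← hBval] at h1
          exact h1
        have := hJε (-(n:ℝ))
        linarith [hsplit ▸ hn]
    · rintro ⟨hc0, hc1⟩ x
      apply mul_pos (hpos x)
      rcases eq_or_lt_of_le hc0 with hc | hc
      · rw [← hc]; norm_num
      · have h1 : 0 < c / B * J x := mul_pos (div_pos hc hBpos) (hJpos x)
        have h2 : 0 ≤ 1 - c := by linarith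
        linarith
end

section
/- Let λ ≤ β̄ where β̄ is the supremum of μ for which Lh = −μh admits a positive solution with h(ξ)=1, and suppose the set of initial slopes C_λ = { h'(ξ) : Lh = −λh, h > 0, h(ξ) = 1 } is nonempty and bounded with infimum m_λ and supremum M_λ. Then C_λ is exactly the closed interval [m_λ, M_λ]; in particular, for every z with m_λ ≤ z ≤ M_λ there exists a positive solution h of Lh = −λh with h(ξ) = 1 and h'(ξ) = z. -/
open Real Set

/-- Derivative package for C² functions on open sets. -/
lemma derivPkg {I : Set ℝ} (hI : IsOpen I) {u : ℝ → ℝ} (hu : ContDiffOn ℝ 2 u I) :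
    (∀ x ∈ I, HasDerivAt u (deriv u x) x) ∧
    (∀ x ∈ I, HasDerivAt (deriv u) (deriv (deriv u) x) x) ∧
    ContinuousOn u I ∧ ContinuousOn (deriv u) I := by
  have hdu : ContDiffOn ℝ 1 (deriv u) I := hu.deriv_of_isOpen hI (by norm_num)
  refine ⟨fun x hx => ?_, fun x hx => ?_, hu.continuousOn, hdu.continuousOn⟩
  · exact (((hu.contDiffAt (hI.mem_nhds hx)).differentiableAt (by norm_num)).hasDerivAt)
  · exact (((hdu.contDiffAt (hI.mem_nhds hx)).differentiableAt (by norm_num)).hasDerivAt)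

/-- Uniqueness: a solution of the linear ODE vanishing to first order at a point of a
preconnected subset of I vanishes on all of it. -/
lemma vanish {I : Set ℝ} (hI : IsOpen I) {J : Set ℝ} (hJI : J ⊆ I)
    (hJc : IsPreconnected J)
    {σ k r : ℝ → ℝ} (hσ : ContinuousOn σ I) (hk : ContinuousOn k I)
    (hr : ContinuousOn r I) (hσpos : ∀ x ∈ I, 0 < σ x) (lam : ℝ)
    {u : ℝ → ℝ} (hu : ContDiffOn ℝ 2 u I)
    (hequ : ∀ x ∈ I, (1/2) * σ x ^ 2 * deriv (deriv u) x + k x * deriv u x - r x * u x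
      = -lam * u x)
    {x0 : ℝ} (hx0 : x0 ∈ J) (hu0 : u x0 = 0) (hu0' : deriv u x0 = 0) :
    ∀ b ∈ J, u b = 0 := by
  intro b hb
  obtain ⟨hd1, hd2, hc1, hc2⟩ := derivPkg hI hu
  have hσne : ∀ x ∈ I, σ x ^ 2 ≠ 0 := fun x hx => by
    have := hσpos x hx; positivity
  -- coefficients
  set A : ℝ → ℝ := fun x => (2 * (r x - lam)) / σ x ^ 2 with hA
  set B : ℝ → ℝ := fun x => -(2 * k x) / σ x ^ 2 with hB
  have hAc : ContinuousOn A I := ContinuousOn.div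
    ((continuousOn_const.mul (hr.sub continuousOn_const))) (hσ.pow 2) hσne
  have hBc : ContinuousOn B I := ContinuousOn.div
    ((continuousOn_const.mul hk).neg) (hσ.pow 2) hσne
  have hode : ∀ x ∈ I, deriv (deriv u) x = A x * u x + B x * deriv u x := by
    intro x hx
    have h1 := hequ x hx
    have h2 := hσne x hx
    have hdd : deriv (deriv u) x = (2 * (r x - lam) * u x + -(2 * k x) * deriv u x) / σ x ^ 2 := by
      rw [eq_div_iff h2]; linear_combination 2 * h1
    rw [hdd]; simp only [hA, hB]; ring
  -- compact interval between x0 and b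
  have hcd : Icc (min x0 b) (max x0 b) ⊆ J := by
    rcases le_total x0 b with h | h
    · rw [min_eq_left h, max_eq_right h]; exact hJc.ordConnected.out hx0 hb
    · rw [min_eq_right h, max_eq_left h]; exact hJc.ordConnected.out hb hx0
  set c := min x0 b
  set d := max x0 b
  have hcled : c ≤ d := min_le_max
  have hIccI : Icc c d ⊆ I := fun x hx => hJI (hcd hx)
  -- bounds for coefficients on the compact interval
  obtain ⟨Ca, hCa⟩ := isCompact_Icc.exists_bound_of_continuousOn (hAc.mono hIccI)
  obtain ⟨Cb, hCb⟩ := isCompact_Icc.exists_bound_of_continuousOn (hBc.mono hIccI)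
  have hCa0 : 0 ≤ Ca := le_trans (norm_nonneg _) (hCa c ⟨le_refl c, hcled⟩)
  have hCb0 : 0 ≤ Cb := le_trans (norm_nonneg _) (hCb c ⟨le_refl c, hcled⟩)
  -- clamped coefficients
  set pr : ℝ → ℝ := fun t => max c (min d t) with hpr
  have hprmem : ∀ t, pr t ∈ Icc c d := fun t =>
    ⟨le_max_left _ _, max_le hcled (min_le_left _ _)⟩
  have hprid : ∀ t ∈ Icc c d, pr t = t := by
    intro t ht
    simp only [hpr, min_eq_right ht.2, max_eq_right ht.1]
  set K : NNReal := Real.toNNReal (max 1 (Ca + Cb)) with hK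
  have hK1 : (1 : ℝ) ≤ K := by
    rw [hK, Real.coe_toNNReal _ (le_max_of_le_left zero_le_one)]
    exact le_max_left _ _
  have hKab : Ca + Cb ≤ (K : ℝ) := by
    rw [hK, Real.coe_toNNReal _ (le_max_of_le_left zero_le_one)]
    exact le_max_right _ _
  set v : ℝ → ℝ × ℝ → ℝ × ℝ := fun t p => (p.2, A (pr t) * p.1 + B (pr t) * p.2) with hv
  have hlip : ∀ t, LipschitzOnWith K (v t) univ := by
    intro t
    apply LipschitzOnWith.of_dist_le_mul
    intro p _ q _
    have hAb : |A (pr t)| ≤ Ca := hCa _ (hprmem t)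
    have hBb : |B (pr t)| ≤ Cb := hCb _ (hprmem t)
    rw [Prod.dist_eq, Prod.dist_eq]
    simp only [hv, Real.dist_eq]
    have h1 : |p.2 - q.2| ≤ max |p.1 - q.1| |p.2 - q.2| := le_max_right _ _
    have h2 : |A (pr t) * p.1 + B (pr t) * p.2 - (A (pr t) * q.1 + B (pr t) * q.2)|
        ≤ Ca * |p.1 - q.1| + Cb * |p.2 - q.2| := by
      have : A (pr t) * p.1 + B (pr t) * p.2 - (A (pr t) * q.1 + B (pr t) * q.2)
          = A (pr t) * (p.1 - q.1) + B (pr t) * (p.2 - q.2) := by ring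
      rw [this]
      refine le_trans (abs_add_le _ _) ?_
      rw [abs_mul, abs_mul]
      gcongr <;> first | exact hAb | exact hBb
    have hm0 : 0 ≤ max |p.1 - q.1| |p.2 - q.2| :=
      le_trans (abs_nonneg _) (le_max_left _ _)
    have hm1 : |p.1 - q.1| ≤ max |p.1 - q.1| |p.2 - q.2| := le_max_left _ _
    rw [max_le_iff]
    constructor
    · nlinarith
    · nlinarith
  set f : ℝ → ℝ × ℝ := fun t => (u t, deriv u t) with hf
  have hfd : ∀ t ∈ Icc c d, HasDerivAt f (v t (f t)) t := by
    intro t ht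
    have htI : t ∈ I := hIccI ht
    have : v t (f t) = (deriv u t, deriv (deriv u) t) := by
      simp only [hv, hf, hprid t ht]
      exact Prod.ext rfl (hode t htI).symm
    rw [this]
    exact (hd1 t htI).prodMk (hd2 t htI)
  set g : ℝ → ℝ × ℝ := fun _ => ((0:ℝ), (0:ℝ)) with hg
  have hgd : ∀ t, HasDerivAt g (v t (g t)) t := by
    intro t
    have : v t (g t) = (0, 0) := by simp [hv, hg]
    rw [this]
    exact hasDerivAt_const t _
  have hinit : f x0 = g x0 := by simp [hf, hg, hu0, hu0']
  have hfc : ContinuousOn f (Icc c d) :=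
    ((hc1.mono hIccI).prodMk (hc2.mono hIccI))
  have key : f b = g b := by
    rcases le_total x0 b with h | h
    · have hcx : c = x0 := min_eq_left h
      have hdb : d = b := max_eq_right h
      have := ODE_solution_unique_of_mem_Icc_right (K := K) (v := v)
        (s := fun _ => univ) (fun t _ => hlip t)
        (hcx ▸ hdb ▸ hfc)
        (fun t ht => (hfd t (hcx ▸ hdb ▸ Ico_subset_Icc_self ht)).hasDerivWithinAt)
        (fun t _ => mem_univ _)
        (continuousOn_const)
        (fun t _ => (hgd t).hasDerivWithinAt)
        (fun t _ => mem_univ _)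
        hinit
      exact this ⟨h, le_refl b⟩
    · have hcx : c = b := min_eq_right h
      have hdb : d = x0 := max_eq_left h
      have := ODE_solution_unique_of_mem_Icc_left (K := K) (v := v)
        (s := fun _ => univ) (fun t _ => hlip t)
        (hcx ▸ hdb ▸ hfc)
        (fun t ht => (hfd t (hcx ▸ hdb ▸ Ioc_subset_Icc_self ht)).hasDerivWithinAt)
        (fun t _ => mem_univ _)
        (continuousOn_const)
        (fun t _ => (hgd t).hasDerivWithinAt)
        (fun t _ => mem_univ _)
        hinit
      exact this ⟨le_refl b, h⟩
  have := congrArg Prod.fst key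
  simpa [hf, hg] using this

open Real Set

lemma compl_component_open {I : Set ℝ} (hI : IsOpen I) (ξ : ℝ) :
    IsOpen (I \ connectedComponentIn I ξ) := by
  have : I \ connectedComponentIn I ξ
      = ⋃ x ∈ I \ connectedComponentIn I ξ, connectedComponentIn I x := by
    ext y
    constructor
    · intro hy
      exact mem_biUnion hy (mem_connectedComponentIn hy.1)
    · intro hy
      simp only [mem_iUnion] at hy
      obtain ⟨x, hx, hyx⟩ := hy
      refine ⟨connectedComponentIn_subset I x hyx, fun hyJ => hx.2 ?_⟩
      have e1 := connectedComponentIn_eq hyx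
      have e2 := connectedComponentIn_eq hyJ
      rw [e2, ← e1]
      exact mem_connectedComponentIn hx.1
  rw [this]
  exact isOpen_biUnion fun x _ => hI.connectedComponentIn

open Real Set

lemma patchLem {I : Set ℝ} (hI : IsOpen I) {ξ : ℝ} (hξ : ξ ∈ I)
    {σ k r : ℝ → ℝ} {lam : ℝ} {g h1 : ℝ → ℝ}
    (hg : ContDiffOn ℝ 2 g I) (hh1 : ContDiffOn ℝ 2 h1 I)
    (hgpos : ∀ x ∈ connectedComponentIn I ξ, 0 < g x)
    (hh1pos : ∀ x ∈ I, 0 < h1 x) (hgval : g ξ = 1)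
    (hgeq : ∀ x ∈ I, (1/2) * σ x ^ 2 * deriv (deriv g) x + k x * deriv g x - r x * g x
      = -lam * g x)
    (hh1eq : ∀ x ∈ I, (1/2) * σ x ^ 2 * deriv (deriv h1) x + k x * deriv h1 x - r x * h1 x
      = -lam * h1 x) :
    ∃ p : ℝ → ℝ, ContDiffOn ℝ 2 p I ∧ (∀ x ∈ I, 0 < p x) ∧ p ξ = 1 ∧
      deriv p ξ = deriv g ξ ∧
      (∀ x ∈ I, (1/2) * σ x ^ 2 * deriv (deriv p) x + k x * deriv p x - r x * p x
        = -lam * p x) := by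
  classical
  set J := connectedComponentIn I ξ with hJ
  have hξJ : ξ ∈ J := mem_connectedComponentIn hξ
  have hJo : IsOpen J := hI.connectedComponentIn
  have hJC : IsOpen (I \ J) := compl_component_open hI ξ
  set p : ℝ → ℝ := fun x => if x ∈ J then g x else h1 x with hp
  have heqJ : ∀ x ∈ J, p =ᶠ[nhds x] g := fun x hx =>
    Filter.eventually_of_mem (hJo.mem_nhds hx) (fun y hy => if_pos hy)
  have heqC : ∀ x ∈ I \ J, p =ᶠ[nhds x] h1 := fun x hx =>
    Filter.eventually_of_mem (hJC.mem_nhds hx) (fun y hy => if_neg hy.2)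
  refine ⟨p, ?_, ?_, ?_, ?_, ?_⟩
  · apply contDiffOn_of_locally_contDiffOn
    intro x hx
    by_cases hxJ : x ∈ J
    · exact ⟨J, hJo, hxJ, (hg.mono inter_subset_left).congr (fun y hy => if_pos hy.2)⟩
    · exact ⟨I \ J, hJC, ⟨hx, hxJ⟩,
        (hh1.mono inter_subset_left).congr (fun y hy => if_neg hy.2.2)⟩
  · intro x hx
    by_cases hxJ : x ∈ J
    · simpa [hp, if_pos hxJ] using hgpos x hxJ
    · simpa [hp, if_neg hxJ] using hh1pos x hx
  · simp [hp, if_pos hξJ, hgval]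
  · exact (heqJ ξ hξJ).deriv_eq
  · intro x hx
    by_cases hxJ : x ∈ J
    · rw [show p x = g x from if_pos hxJ, (heqJ x hxJ).deriv_eq,
        ((heqJ x hxJ).deriv).deriv_eq]
      exact hgeq x hx
    · rw [show p x = h1 x from if_neg hxJ, (heqC x ⟨hx, hxJ⟩).deriv_eq,
        ((heqC x ⟨hx, hxJ⟩).deriv).deriv_eq]
      exact hh1eq x hx

set_option maxHeartbeats 1000000 in
theorem stmt3 (I : Set ℝ) (hI : IsOpen I) (ξ : ℝ) (hξ : ξ ∈ I)
    (σ k r : ℝ → ℝ) (hσ : ContDiffOn ℝ 1 σ I) (hk : ContDiffOn ℝ 1 k I)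
    (hr : ContDiffOn ℝ 1 r I) (hσpos : ∀ x ∈ I, 0 < σ x)
    (βbar : ℝ)
    (hβ : βbar = sSup {μ : ℝ | ∃ h : ℝ → ℝ, ContDiffOn ℝ 2 h I ∧
      (∀ x ∈ I, 0 < h x) ∧ h ξ = 1 ∧
      (∀ x ∈ I, (1/2) * σ x ^ 2 * deriv (deriv h) x + k x * deriv h x - r x * h x
        = -μ * h x)})
    (lam : ℝ) (hlam : lam ≤ βbar)
    (C : Set ℝ)
    (hC : C = {z : ℝ | ∃ h : ℝ → ℝ, ContDiffOn ℝ 2 h I ∧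
      (∀ x ∈ I, 0 < h x) ∧ h ξ = 1 ∧ deriv h ξ = z ∧
      (∀ x ∈ I, (1/2) * σ x ^ 2 * deriv (deriv h) x + k x * deriv h x - r x * h x
        = -lam * h x)})
    (hne : C.Nonempty) (hbdda : BddAbove C) (hbddb : BddBelow C) :
    C = Set.Icc (sInf C) (sSup C) := by
  refine Set.Subset.antisymm (fun z hz => ⟨csInf_le hbddb hz, le_csSup hbdda hz⟩) ?_
  intro z hz
  obtain ⟨hzl, hzr⟩ := hz
  rcases eq_or_lt_of_le (csInf_le_csSup hne hbddb hbdda) with heq | hlt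
  · obtain ⟨z0, hz0⟩ := hne
    have h1 : z0 ≤ sSup C := le_csSup hbdda hz0
    have h2 : sInf C ≤ z0 := csInf_le hbddb hz0
    have hzz : z = z0 := by linarith [heq.le, heq.ge]
    exact hzz ▸ hz0
  · obtain ⟨z1, hz1C, hz1lt⟩ := exists_lt_of_csInf_lt hne
      (show sInf C < (sInf C + sSup C) / 2 by linarith)
    obtain ⟨z2, hz2C, hz2gt⟩ := exists_lt_of_lt_csSup hne
      (show (sInf C + sSup C) / 2 < sSup C by linarith)
    have h12 : z1 < z2 := hz1lt.trans hz2gt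
    have h21 : (0:ℝ) < z2 - z1 := by linarith
    rw [hC] at hz1C hz2C
    obtain ⟨h1, hh1cd, hh1pos, hh1val, hh1der, hh1eq⟩ := hz1C
    obtain ⟨h2, hh2cd, hh2pos, hh2val, hh2der, hh2eq⟩ := hz2C
    set J := connectedComponentIn I ξ with hJ
    have hξJ : ξ ∈ J := mem_connectedComponentIn hξ
    have hJI : J ⊆ I := connectedComponentIn_subset I ξ
    have hJo : IsOpen J := hI.connectedComponentIn
    have hJc : IsPreconnected J := isPreconnected_connectedComponentIn
    obtain ⟨hd1, hd1', hc1, hc1'⟩ := derivPkg hI hh1cd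
    obtain ⟨hd2, hd2', hc2, hc2'⟩ := derivPkg hI hh2cd
    set g : ℝ → ℝ → ℝ := fun s x => (1 - s) * h1 x + s * h2 x with hgdef
    have hgcd : ∀ s, ContDiffOn ℝ 2 (g s) I := fun s =>
      (contDiffOn_const.mul hh1cd).add (contDiffOn_const.mul hh2cd)
    have hgd : ∀ s, ∀ x ∈ I, HasDerivAt (g s)
        ((1 - s) * deriv h1 x + s * deriv h2 x) x := fun s x hx =>
      ((hd1 x hx).const_mul (1 - s)).add ((hd2 x hx).const_mul s)
    have hgder : ∀ s, ∀ x ∈ I, deriv (g s) x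
        = (1 - s) * deriv h1 x + s * deriv h2 x := fun s x hx => (hgd s x hx).deriv
    have hgder2 : ∀ s, ∀ x ∈ I, deriv (deriv (g s)) x
        = (1 - s) * deriv (deriv h1) x + s * deriv (deriv h2) x := by
      intro s x hx
      have hev : deriv (g s) =ᶠ[nhds x]
          fun y => (1 - s) * deriv h1 y + s * deriv h2 y :=
        Filter.eventually_of_mem (hI.mem_nhds hx) (fun y hy => hgder s y hy)
      rw [hev.deriv_eq]
      exact (((hd1' x hx).const_mul (1 - s)).add ((hd2' x hx).const_mul s)).deriv
    have hgval : ∀ s, g s ξ = 1 := by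
      intro s; simp only [hgdef, hh1val, hh2val]; ring
    have hgderξ : ∀ s, deriv (g s) ξ = z1 + s * (z2 - z1) := by
      intro s; rw [hgder s ξ hξ, hh1der, hh2der]; ring
    have hgeq : ∀ s, ∀ x ∈ I, (1/2) * σ x ^ 2 * deriv (deriv (g s)) x
        + k x * deriv (g s) x - r x * g s x = -lam * g s x := by
      intro s x hx
      rw [hgder s x hx, hgder2 s x hx]
      simp only [hgdef]
      linear_combination (1 - s) * (hh1eq x hx) + s * (hh2eq x hx)
    set S : Set ℝ := {s : ℝ | ∀ x ∈ J, 0 < g s x} with hS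
    have key1 : ∀ s ∈ S, z1 + s * (z2 - z1) ∈ C := by
      intro s hs
      obtain ⟨p, hpcd, hppos, hpval, hpder, hpeq⟩ :=
        patchLem hI hξ (hgcd s) hh1cd hs hh1pos (hgval s) (hgeq s) hh1eq
      rw [hC]
      exact ⟨p, hpcd, hppos, hpval, by rw [hpder, hgderξ], hpeq⟩
    have key2 : ∀ z' ∈ C, (z' - z1) / (z2 - z1) ∈ S := by
      intro z' hzC
      rw [hC] at hzC
      obtain ⟨h, hhcd, hhpos, hhval, hhder, hheq⟩ := hzC
      set s := (z' - z1) / (z2 - z1) with hsdef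
      obtain ⟨hdh, hdh', _, _⟩ := derivPkg hI hhcd
      obtain ⟨hgsd, hgsd', _, _⟩ := derivPkg hI (hgcd s)
      set u : ℝ → ℝ := fun x => h x - g s x with hu
      have hucd : ContDiffOn ℝ 2 u I := hhcd.sub (hgcd s)
      have huder : ∀ x ∈ I, deriv u x = deriv h x - deriv (g s) x :=
        fun x hx => ((hdh x hx).sub (hgsd x hx)).deriv
      have huder2 : ∀ x ∈ I, deriv (deriv u) x
          = deriv (deriv h) x - deriv (deriv (g s)) x := by
        intro x hx
        have hev : deriv u =ᶠ[nhds x] fun y => deriv h y - deriv (g s) y :=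
          Filter.eventually_of_mem (hI.mem_nhds hx) (fun y hy => huder y hy)
        rw [hev.deriv_eq]
        exact ((hdh' x hx).sub (hgsd' x hx)).deriv
      have hueq : ∀ x ∈ I, (1/2) * σ x ^ 2 * deriv (deriv u) x + k x * deriv u x
          - r x * u x = -lam * u x := by
        intro x hx
        rw [huder x hx, huder2 x hx]
        simp only [hu]
        linear_combination (hheq x hx) - (hgeq s x hx)
      have hu0 : u ξ = 0 := by simp [hu, hhval, hgval s]
      have hu0' : deriv u ξ = 0 := by
        rw [huder ξ hξ, hhder, hgderξ s, hsdef]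
        field_simp
        ring
      have hvan := vanish hI hJI hJc hσ.continuousOn hk.continuousOn
        hr.continuousOn hσpos lam hucd hueq hξJ hu0 hu0'
      intro x hx
      have hx0 := hvan x hx
      have hgx : g s x = h x := by
        simp only [hu] at hx0; linarith
      rw [hgx]
      exact hhpos x (hJI hx)
    have hS0 : (0:ℝ) ∈ S := by
      intro x hx
      have := hh1pos x (hJI hx)
      simp only [hgdef]
      linarith
    have hSne : S.Nonempty := ⟨0, hS0⟩
    have hSbddA : BddAbove S := ⟨(sSup C - z1) / (z2 - z1), fun s hs => by
      have := le_csSup hbdda (key1 s hs)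
      rw [le_div_iff₀ h21]
      linarith⟩
    have hSbddB : BddBelow S := ⟨(sInf C - z1) / (z2 - z1), fun s hs => by
      have := csInf_le hbddb (key1 s hs)
      rw [div_le_iff₀ h21]
      linarith⟩
    have hclos : ∀ t : ℝ, (∀ ε > (0:ℝ), ∃ s ∈ S, |s - t| < ε) → t ∈ S := by
      intro t ht
      have hge : ∀ x ∈ J, 0 ≤ g t x := by
        intro x hx
        by_contra hneg
        push_neg at hneg
        have hε : (0:ℝ) < (-(g t x)) / (|h2 x - h1 x| + 1) :=
          div_pos (by linarith) (by positivity)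
        obtain ⟨s, hsS, hs⟩ := ht _ hε
        have hgs := hsS x hx
        have hexp : g s x = g t x + (s - t) * (h2 x - h1 x) := by
          simp only [hgdef]; ring
        have hb1 : (s - t) * (h2 x - h1 x) ≤ |s - t| * |h2 x - h1 x| := by
          calc (s - t) * (h2 x - h1 x) ≤ |(s - t) * (h2 x - h1 x)| := le_abs_self _
          _ = |s - t| * |h2 x - h1 x| := abs_mul _ _
        have hb2 : |s - t| * |h2 x - h1 x| ≤ |s - t| * (|h2 x - h1 x| + 1) :=
          mul_le_mul_of_nonneg_left (by linarith) (abs_nonneg _)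
        have hb3 : |s - t| * (|h2 x - h1 x| + 1) < -(g t x) :=
          (lt_div_iff₀ (by positivity)).mp hs
        linarith
      intro x hx
      rcases (hge x hx).lt_or_eq with h | h
      · exact h
      exfalso
      have hmin : IsLocalMin (g t) x :=
        Filter.eventually_of_mem (hJo.mem_nhds hx) (fun y hy => by
          rw [← h]; exact hge y hy)
      have hder0 : deriv (g t) x = 0 := hmin.deriv_eq_zero
      have hvan := vanish hI hJI hJc hσ.continuousOn hk.continuousOn
        hr.continuousOn hσpos lam (hgcd t) (hgeq t) hx h.symm hder0
      have := hvan ξ hξJ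
      rw [hgval t] at this
      exact one_ne_zero this
    have hsupS : sSup S ∈ S := by
      apply hclos
      intro ε hε
      obtain ⟨s, hsS, hslt⟩ := exists_lt_of_lt_csSup hSne
        (show sSup S - ε < sSup S by linarith)
      exact ⟨s, hsS, abs_lt.mpr ⟨by linarith,
        by linarith [le_csSup hSbddA hsS]⟩⟩
    have hinfS : sInf S ∈ S := by
      apply hclos
      intro ε hε
      obtain ⟨s, hsS, hslt⟩ := exists_lt_of_csInf_lt hSne
        (show sInf S < sInf S + ε by linarith)
      exact ⟨s, hsS, abs_lt.mpr ⟨by linarith [csInf_le hSbddB hsS],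
        by linarith⟩⟩
    have hsupC : sSup C = z1 + sSup S * (z2 - z1) := by
      apply le_antisymm
      · apply csSup_le hne
        intro z' hzC
        have hsz := le_csSup hSbddA (key2 z' hzC)
        have hzeq : z' = z1 + ((z' - z1) / (z2 - z1)) * (z2 - z1) := by
          field_simp
          ring
        nlinarith [mul_le_mul_of_nonneg_right hsz h21.le]
      · exact le_csSup hbdda (key1 _ hsupS)
    have hinfC : sInf C = z1 + sInf S * (z2 - z1) := by
      apply le_antisymm
      · exact csInf_le hbddb (key1 _ hinfS)
      · apply le_csInf hne
        intro z' hzC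
        have hsz := csInf_le hSbddB (key2 z' hzC)
        have hzeq : z' = z1 + ((z' - z1) / (z2 - z1)) * (z2 - z1) := by
          field_simp
          ring
        nlinarith [mul_le_mul_of_nonneg_right hsz h21.le]
    have hconv : ∀ sa ∈ S, ∀ sb ∈ S, ∀ s : ℝ, sa ≤ s → s ≤ sb → s ∈ S := by
      intro sa hsa sb hsb s h1s h2s x hx
      have A := hsa x hx
      have B := hsb x hx
      have e1 : g s x = g sa x + (s - sa) * (h2 x - h1 x) := by
        simp only [hgdef]; ring
      have e2 : g s x = g sb x + (s - sb) * (h2 x - h1 x) := by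
        simp only [hgdef]; ring
      rcases le_or_gt 0 (h2 x - h1 x) with hd | hd
      · nlinarith [mul_nonneg (sub_nonneg.2 h1s) hd]
      · nlinarith [mul_nonneg (sub_nonneg.2 h2s) (neg_nonneg.2 hd.le)]
    have hszl : sInf S ≤ (z - z1) / (z2 - z1) := by
      rw [le_div_iff₀ h21]
      rw [hinfC] at hzl
      linarith
    have hszr : (z - z1) / (z2 - z1) ≤ sSup S := by
      rw [div_le_iff₀ h21]
      rw [hsupC] at hzr
      linarith
    have hmem : (z - z1) / (z2 - z1) ∈ S :=
      hconv (sInf S) hinfS (sSup S) hsupS _ hszl hszr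
    have := key1 _ hmem
    have hzeq : z1 + ((z - z1) / (z2 - z1)) * (z2 - z1) = z := by
      field_simp
      ring
    rwa [hzeq] at this
end

section
/- Let v : ℝ → ℝ be C¹ with v(0) = 1, and let Γ be a C¹ solution on ℝ of the Riccati-type equation Γ' = −Γ² − (2v'/v)Γ with Γ(0) > 0 and v > 0. Then Γ(x) ≥ 0 for all x, and for all x the identity 1/v²(x) = (Γ(x)/Γ(0))·exp(∫₀ˣ Γ(y) dy) holds. -/
open Real intervalIntegral

theorem stmt4 (v Γ : ℝ → ℝ) (hv : ContDiff ℝ 1 v) (hvpos : ∀ x, 0 < v x)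
    (hv0 : v 0 = 1) (hΓ : ContDiff ℝ 1 Γ)
    (hode : ∀ x, deriv Γ x = -(Γ x) ^ 2 - (2 * deriv v x / v x) * Γ x)
    (hΓ0 : 0 < Γ 0) :
    (∀ x, 0 ≤ Γ x) ∧
    (∀ x, 1 / (v x) ^ 2 = (Γ x / Γ 0) * Real.exp (∫ y in (0:ℝ)..x, Γ y)) := by
  have hvd : Differentiable ℝ v := hv.differentiable one_ne_zero
  have hΓd : Differentiable ℝ Γ := hΓ.differentiable one_ne_zero
  set E : ℝ → ℝ := fun x => Real.exp (∫ y in (0:ℝ)..x, Γ y) with hE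
  set F : ℝ → ℝ := fun x => Γ x * (v x) ^ 2 * E x with hF
  have hFd : ∀ x, HasDerivAt F 0 x := by
    intro x
    have hI : HasDerivAt (fun u => ∫ y in (0:ℝ)..u, Γ y) (Γ x) x :=
      ((hΓ.continuous).integral_hasStrictDerivAt 0 x).hasDerivAt
    have hEx : HasDerivAt E (E x * Γ x) x := by
      simpa [hE, mul_comm] using (hI.exp)
    have hvx : HasDerivAt v (deriv v x) x := (hvd x).hasDerivAt
    have hΓx : HasDerivAt Γ (deriv Γ x) x := (hΓd x).hasDerivAt
    have h1 : HasDerivAt (fun u => Γ u * (v u) ^ 2)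
        (deriv Γ x * (v x) ^ 2 + Γ x * (2 * v x * deriv v x)) x := by
      have := hΓx.mul ((hvx.pow 2))
      simpa [mul_comm, mul_assoc, pow_one, Pi.mul_def, Pi.pow_def] using this
    have h2 := h1.mul hEx
    have hvne : v x ≠ 0 := (hvpos x).ne'
    have : (deriv Γ x * (v x) ^ 2 + Γ x * (2 * v x * deriv v x)) * E x +
        Γ x * (v x) ^ 2 * (E x * Γ x) = 0 := by
      rw [hode x]
      field_simp
      ring
    simpa [hF, this, Pi.mul_def] using h2
  have hconst : ∀ x, F x = F 0 := by
    intro x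
    exact is_const_of_deriv_eq_zero (fun y => (hFd y).differentiableAt)
      (fun y => (hFd y).deriv) x 0
  have hF0 : F 0 = Γ 0 := by simp [hF, hE, hv0]
  have key : ∀ x, Γ x * (v x) ^ 2 * E x = Γ 0 := fun x => (hconst x).trans hF0
  have hΓpos : ∀ x, 0 < Γ x := by
    intro x
    have h := key x
    have hE' : 0 < E x := Real.exp_pos _
    have hv2 : 0 < (v x) ^ 2 := pow_pos (hvpos x) 2
    nlinarith [mul_pos hv2 hE', hΓ0, h]
  refine ⟨fun x => (hΓpos x).le, fun x => ?_⟩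
  have h := key x
  have hE' : (0:ℝ) < E x := Real.exp_pos _
  have hvne : v x ≠ 0 := (hvpos x).ne'
  field_simp
  linarith [key x]
end

section
/- Let v > 0 be C¹ on ℝ with v(0)=1 and let Γ be a C¹ function on ℝ satisfying Γ' = −Γ² − (2v'/v)Γ with Γ(0) > 0. Then ∫_{−∞}^0 v^{−2}(y) dy = (1/Γ(0))·(1 − exp(−∫_{−∞}^0 Γ(y) dy)) ≤ 1/Γ(0) < ∞; in particular the integral ∫_{−∞}^0 v^{−2}(y) dy is finite. -/
open Real MeasureTheory intervalIntegral Filter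

theorem stmt5 (v Γ : ℝ → ℝ) (hv : ContDiff ℝ 1 v) (hvpos : ∀ x, 0 < v x)
    (hv0 : v 0 = 1) (hΓ : ContDiff ℝ 1 Γ)
    (hode : ∀ x, deriv Γ x = -(Γ x) ^ 2 - (2 * deriv v x / v x) * Γ x)
    (hΓ0 : 0 < Γ 0) :
    (∀ a : ℝ, a < 0 →
      ∫ y in a..(0:ℝ), 1 / (v y) ^ 2
        = (1 / Γ 0) * (1 - Real.exp (-(∫ y in a..(0:ℝ), Γ y)))) ∧
    IntegrableOn (fun y => 1 / (v y) ^ 2) (Set.Iic 0) volume ∧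
    Tendsto (fun n : ℕ => ∫ y in (-(n:ℝ))..(0:ℝ), 1 / (v y) ^ 2) atTop
      (nhds (∫ y in Set.Iic (0:ℝ), 1 / (v y) ^ 2)) ∧
    (∫ y in Set.Iic (0:ℝ), 1 / (v y) ^ 2) ≤ 1 / Γ 0 := by
  have hvne : ∀ x, v x ≠ 0 := fun x => (hvpos x).ne'
  have hvc : Continuous v := hv.continuous
  have hΓc : Continuous Γ := hΓ.continuous
  have hvd : Differentiable ℝ v := hv.differentiable one_ne_zero
  have hΓd : Differentiable ℝ Γ := hΓ.differentiable one_ne_zero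
  set G : ℝ → ℝ := fun x => ∫ t in (0:ℝ)..x, Γ t with hGdef
  have hG : ∀ x, HasDerivAt G (Γ x) x := by
    intro x
    exact intervalIntegral.integral_hasDerivAt_right
      (hΓc.intervalIntegrable _ _)
      hΓc.aestronglyMeasurable.stronglyMeasurableAtFilter hΓc.continuousAt
  set w : ℝ → ℝ := fun x => Γ x * (v x) ^ 2 with hwdef
  have hw : ∀ x, HasDerivAt w (-(Γ x) * w x) x := by
    intro x
    have h1 : HasDerivAt w
        (deriv Γ x * (v x) ^ 2 + Γ x * (2 * v x ^ 1 * deriv v x)) x :=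
      (hΓd x).hasDerivAt.mul ((hvd x).hasDerivAt.pow 2)
    convert h1 using 1
    rw [hode x]
    field_simp [hvne x]
    ring
  have hwG : ∀ x, w x * Real.exp (G x) = Γ 0 := by
    have hu : ∀ x, HasDerivAt (fun x => w x * Real.exp (G x)) 0 x := by
      intro x
      have := (hw x).mul ((hG x).exp)
      refine this.congr_deriv ?_
      ring
    intro x
    have hconst := is_const_of_deriv_eq_zero
      (fun y => (hu y).differentiableAt) (fun y => (hu y).deriv) x 0
    have hG0 : G 0 = 0 := intervalIntegral.integral_same
    simpa [hwdef, hG0, hv0] using hconst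
  have hweq : ∀ x, w x = Γ 0 * Real.exp (-(G x)) := by
    intro x
    rw [Real.exp_neg, ← hwG x]
    field_simp
  have hwpos : ∀ x, 0 < w x := by
    intro x
    rw [hweq x]
    positivity
  have hΓpos : ∀ x, 0 < Γ x := by
    intro x
    have h : 0 < Γ x * v x ^ 2 := hwpos x
    have hv2 : (0:ℝ) < v x ^ 2 := pow_pos (hvpos x) 2
    nlinarith
  have hF : ∀ x, HasDerivAt (fun y => (w y)⁻¹) (1 / (v x) ^ 2) x := by
    intro x
    have := (hw x).inv (hwpos x).ne'
    refine this.congr_deriv ?_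
    rw [hwdef]
    field_simp [hvne x, (hΓpos x).ne']
  have hcont2 : Continuous (fun y => 1 / (v y) ^ 2) :=
    continuous_const.div (by continuity) (fun x => pow_ne_zero 2 (hvne x))
  have key : ∀ a : ℝ, a < 0 →
      ∫ y in a..(0:ℝ), 1 / (v y) ^ 2
        = (1 / Γ 0) * (1 - Real.exp (-(∫ y in a..(0:ℝ), Γ y))) := by
    intro a ha
    have hint : ∫ y in a..(0:ℝ), 1 / (v y) ^ 2 = (w 0)⁻¹ - (w a)⁻¹ :=
      intervalIntegral.integral_eq_sub_of_hasDerivAt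
        (fun x _ => hF x) (hcont2.intervalIntegrable _ _)
    have hGa : G a = -(∫ y in a..(0:ℝ), Γ y) := by
      rw [hGdef]
      simp [intervalIntegral.integral_symm a 0]
    have hw0 : w 0 = Γ 0 := by simp [hwdef, hv0]
    rw [hint, hw0, hweq a, hGa]
    rw [mul_inv, Real.exp_neg]
    field_simp
  have hbound : ∀ a : ℝ, a < 0 →
      (∫ y in a..(0:ℝ), 1 / (v y) ^ 2) ≤ 1 / Γ 0 := by
    intro a ha
    rw [key a ha]
    have h1 : (0:ℝ) < 1 / Γ 0 := one_div_pos.mpr hΓ0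
    nlinarith [Real.exp_pos (-(∫ y in a..(0:ℝ), Γ y))]
  have hinteg : IntegrableOn (fun y => 1 / (v y) ^ 2) (Set.Iic 0) volume := by
    apply MeasureTheory.integrableOn_Iic_of_intervalIntegral_norm_bounded (1 / Γ 0) 0
      (f := fun y => 1 / (v y) ^ 2) (a := fun n : ℕ => -(n:ℝ) - 1) (l := atTop)
    · intro i
      exact (hcont2.integrableOn_Icc).mono_set Set.Ioc_subset_Icc_self
    · exact tendsto_atBot_add_const_right _ _
        (tendsto_neg_atBot_iff.mpr tendsto_natCast_atTop_atTop)
    · filter_upwards with n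
      have hlt : -(n:ℝ) - 1 < 0 := by
        have : (0:ℝ) ≤ n := Nat.cast_nonneg n
        linarith
      have : ∀ y, ‖1 / (v y) ^ 2‖ = 1 / (v y) ^ 2 := by
        intro y
        rw [Real.norm_eq_abs, abs_of_pos (by have := hvpos y; positivity)]
      simp_rw [this]
      exact hbound _ hlt
  have htend : Tendsto (fun n : ℕ => ∫ y in (-(n:ℝ))..(0:ℝ), 1 / (v y) ^ 2) atTop
      (nhds (∫ y in Set.Iic (0:ℝ), 1 / (v y) ^ 2)) := by
    apply MeasureTheory.intervalIntegral_tendsto_integral_Iic _ hinteg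
    exact tendsto_neg_atBot_iff.mpr tendsto_natCast_atTop_atTop
  refine ⟨key, hinteg, htend, ?_⟩
  apply le_of_tendsto htend
  filter_upwards [eventually_ge_atTop 1] with n hn
  have hlt : -(n:ℝ) < 0 := by
    have : (1:ℝ) ≤ n := by exact_mod_cast hn
    linarith
  exact hbound _ hlt
end

section
/- Let u, v be positive C² solutions on ℝ of u'' + c_λ(x)u = 0 and v'' + c_δ(x)v = 0 respectively, where c_λ(x) − c_δ(x) = 2(λ−δ)/σ²(x) with λ > δ and σ²(x) > 0, and set Γ = u'/u − v'/v. Then Γ satisfies the Riccati equation Γ' = −Γ² − (2v'/v)Γ − 2(λ−δ)/σ², and if Γ(x₀) = 0 for some x₀, then Γ(x) > 0 for all x < x₀. -/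
open Real

theorem stmt6 (σ u v clam cdel : ℝ → ℝ) (lam δ : ℝ) (hld : δ < lam)
    (hσ : Continuous σ) (hσpos : ∀ x, 0 < σ x)
    (hcl : Continuous clam) (hcd : Continuous cdel)
    (hdiff : ∀ x, clam x - cdel x = 2 * (lam - δ) / σ x ^ 2)
    (hu : ContDiff ℝ 2 u) (hv : ContDiff ℝ 2 v)
    (hupos : ∀ x, 0 < u x) (hvpos : ∀ x, 0 < v x)
    (huode : ∀ x, deriv (deriv u) x = -(clam x) * u x)
    (hvode : ∀ x, deriv (deriv v) x = -(cdel x) * v x)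
    (Γ : ℝ → ℝ) (hΓdef : ∀ x, Γ x = deriv u x / u x - deriv v x / v x) :
    (∀ x, deriv Γ x = -(Γ x) ^ 2 - (2 * deriv v x / v x) * Γ x
      - 2 * (lam - δ) / σ x ^ 2) ∧
    (∀ x₀ : ℝ, Γ x₀ = 0 → ∀ x < x₀, 0 < Γ x) := by
  have hu2 : ContDiff ℝ ((1:ℕ∞)+1) u := by convert hu using 2; rfl
  have hv2 : ContDiff ℝ ((1:ℕ∞)+1) v := by convert hv using 2; rfl
  have hu1 : ContDiff ℝ 1 (deriv u) := (contDiff_succ_iff_deriv.mp hu2).2.2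
  have hv1 : ContDiff ℝ 1 (deriv v) := (contDiff_succ_iff_deriv.mp hv2).2.2
  have hud : Differentiable ℝ u := hu.differentiable (by norm_num)
  have hvd : Differentiable ℝ v := hv.differentiable (by norm_num)
  have hud2 : Differentiable ℝ (deriv u) := hu1.differentiable (by norm_num)
  have hvd2 : Differentiable ℝ (deriv v) := hv1.differentiable (by norm_num)
  have hune : ∀ x, u x ≠ 0 := fun x => (hupos x).ne'
  have hvne : ∀ x, v x ≠ 0 := fun x => (hvpos x).ne'
  have hσne : ∀ x, σ x ≠ 0 := fun x => (hσpos x).ne'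
  have hΓfun : Γ = fun x => deriv u x / u x - deriv v x / v x := funext hΓdef
  have hderiv : ∀ x, deriv Γ x =
      (deriv (deriv u) x * u x - deriv u x * deriv u x) / u x ^ 2 -
      (deriv (deriv v) x * v x - deriv v x * deriv v x) / v x ^ 2 := by
    intro x
    have h1 : HasDerivAt (fun y => deriv u y / u y)
        ((deriv (deriv u) x * u x - deriv u x * deriv u x) / u x ^ 2) x :=
      ((hud2 x).hasDerivAt).div ((hud x).hasDerivAt) (hune x)
    have h2 : HasDerivAt (fun y => deriv v y / v y)
        ((deriv (deriv v) x * v x - deriv v x * deriv v x) / v x ^ 2) x :=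
      ((hvd2 x).hasDerivAt).div ((hvd x).hasDerivAt) (hvne x)
    rw [hΓfun]
    exact (h1.sub h2).deriv
  constructor
  · intro x
    rw [hderiv x, huode x, hvode x, hΓdef x, ← hdiff x]
    have e1 : (u x)^2 * ((u x)⁻¹)^2 = 1 := by rw [← mul_pow, mul_inv_cancel₀ (hune x), one_pow]
    have e2 : (v x)^2 * ((v x)⁻¹)^2 = 1 := by rw [← mul_pow, mul_inv_cancel₀ (hvne x), one_pow]
    field_simp
    linear_combination (-clam x) * e1 + cdel x * e2
  · -- Wronskian argument
    intro x₀ h0 x hx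
    set W : ℝ → ℝ := fun y => deriv u y * v y - u y * deriv v y with hW
    have hWd : ∀ y, HasDerivAt W (-(2 * (lam - δ) / σ y ^ 2) * (u y * v y)) y := by
      intro y
      have h1 : HasDerivAt W
          (deriv (deriv u) y * v y + deriv u y * deriv v y -
           (deriv u y * deriv v y + u y * deriv (deriv v) y)) y :=
        (((hud2 y).hasDerivAt).mul ((hvd y).hasDerivAt)).sub
          (((hud y).hasDerivAt).mul ((hvd2 y).hasDerivAt))
      convert h1 using 1
      rw [huode y, hvode y, ← hdiff y]
      ring
    have hWanti : StrictAnti W := by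
      apply strictAnti_of_deriv_neg
      intro y
      rw [(hWd y).deriv]
      have hpos : 0 < 2 * (lam - δ) / σ y ^ 2 :=
        div_pos (by linarith) (pow_pos (hσpos y) 2)
      have := mul_pos (hupos y) (hvpos y)
      nlinarith
    have hW0 : W x₀ = 0 := by
      have := hΓdef x₀
      rw [h0] at this
      have h' : deriv u x₀ / u x₀ = deriv v x₀ / v x₀ := by linarith
      rw [div_eq_div_iff (hune x₀) (hvne x₀)] at h'
      simp only [hW]
      linarith
    have hWx : 0 < W x := by
      have := hWanti hx
      rw [hW0] at this
      exact this
    rw [hΓdef x, div_sub_div _ _ (hune x) (hvne x)]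
    exact div_pos hWx (mul_pos (hupos x) (hvpos x))
end

section
/- For the geometric Brownian motion stock model, consider the ODE (1/2)σ²s²h''(s) + (r−δ)s h'(s) − r h(s) = −λ h(s) on (0,∞) with constants σ > 0, r, δ, λ ∈ ℝ. If λ < (1/2)(σ/2 − (r−δ)/σ)² + r, then every positive solution h with h(1) = 1 has the form h(s) = c·s^{l₁} + (1−c)·s^{l₂} for some c ∈ [0,1], where l_{1,2} = 1/2 − (r−δ)/σ² ∓ sqrt((1/2 − (r−δ)/σ²)² + 2(r−λ)/σ²). -/
open Real

/-- A function with zero derivative on `Ioi 0` is constant there (equal to its value at 1). -/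
lemma stmt8_const_on_Ioi {f : ℝ → ℝ} (hf : ∀ x ∈ Set.Ioi (0:ℝ), HasDerivAt f 0 x)
    {x : ℝ} (hx : x ∈ Set.Ioi (0:ℝ)) : f x = f 1 := by
  refine (convex_Ioi (0:ℝ)).is_const_of_fderivWithin_eq_zero
    (fun y hy => ((hf y hy).differentiableAt).differentiableWithinAt) ?_ hx (by norm_num)
  intro y hy
  rw [(hf y hy).hasFDerivAt.hasFDerivWithinAt.fderivWithin (isOpen_Ioi.uniqueDiffOn y hy)]
  ext; simp

theorem stmt8 (σ r δ lam : ℝ) (hσ : 0 < σ)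
    (hlam : lam < (1/2) * (σ/2 - (r - δ)/σ) ^ 2 + r)
    (h : ℝ → ℝ) (hh : ContDiffOn ℝ 2 h (Set.Ioi 0))
    (hpos : ∀ s > (0:ℝ), 0 < h s) (h1 : h 1 = 1)
    (hode : ∀ s > (0:ℝ),
      (1/2) * σ ^ 2 * s ^ 2 * deriv (deriv h) s + (r - δ) * s * deriv h s - r * h s
        = -lam * h s)
    (l₁ l₂ : ℝ)
    (hl₁ : l₁ = 1/2 - (r - δ)/σ^2
      - Real.sqrt ((1/2 - (r - δ)/σ^2) ^ 2 + 2 * (r - lam)/σ^2))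
    (hl₂ : l₂ = 1/2 - (r - δ)/σ^2
      + Real.sqrt ((1/2 - (r - δ)/σ^2) ^ 2 + 2 * (r - lam)/σ^2)) :
    ∃ c ∈ Set.Icc (0:ℝ) 1, ∀ s > (0:ℝ), h s = c * s ^ l₁ + (1 - c) * s ^ l₂ := by
  have hσ0 : σ ≠ 0 := ne_of_gt hσ
  have hσ2 : (0:ℝ) < σ^2 := by positivity
  set m : ℝ := 1/2 - (r - δ)/σ^2 with hm
  set D : ℝ := m ^ 2 + 2 * (r - lam)/σ^2 with hD
  -- positivity of the discriminant
  have hDpos : 0 < D := by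
    have e : (1/2) * (σ/2 - (r - δ)/σ) ^ 2 = σ^2/2 * m^2 := by
      rw [hm]; field_simp
    rw [e] at hlam
    have num : 0 < m^2 * σ^2 + 2*(r - lam) := by nlinarith
    have : D = (m^2 * σ^2 + 2*(r - lam))/σ^2 := by rw [hD]; field_simp
    rw [this]; positivity
  set sq : ℝ := Real.sqrt D with hsqdef
  have hsq : sq ^ 2 = D := Real.sq_sqrt hDpos.le
  have hsqpos : 0 < sq := Real.sqrt_pos.2 hDpos
  have hΔ : 0 < l₂ - l₁ := by rw [hl₁, hl₂]; linarith
  have hΔ0 : l₂ - l₁ ≠ 0 := ne_of_gt hΔ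
  -- Vieta
  have hsum : l₁ + l₂ = 2 * m := by rw [hl₁, hl₂]; ring
  have hprod : l₁ * l₂ = m^2 - D := by rw [hl₁, hl₂]; linear_combination -hsq
  -- rewritten ODE
  have keyode : ∀ s, 0 < s →
      s^2 * deriv (deriv h) s + (1 - (l₁ + l₂)) * (s * deriv h s) + (l₁ * l₂) * h s = 0 := by
    intro s hs
    have H := hode s hs
    have c1 : σ^2 * (1 - (l₁ + l₂)) = 2*(r - δ) := by
      rw [hsum, hm]; field_simp; ring
    have c2 : σ^2 * (l₁ * l₂) = 2*(lam - r) := by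
      rw [hprod, hD, hm]; field_simp; ring
    have key : σ^2 * (s^2 * deriv (deriv h) s + (1 - (l₁ + l₂)) * (s * deriv h s)
        + (l₁ * l₂) * h s) = σ^2 * 0 := by
      rw [mul_zero]
      linear_combination 2 * H + (s * deriv h s) * c1 + (h s) * c2
    exact mul_left_cancel₀ (ne_of_gt hσ2) key
  -- differentiability
  have hdiff1 : DifferentiableOn ℝ h (Set.Ioi 0) := hh.differentiableOn (by norm_num)
  have hh2 : ContDiffOn ℝ 1 (deriv h) (Set.Ioi (0:ℝ)) := by
    have e2 : (2 : WithTop ℕ∞) = 1 + 1 := by norm_num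
    rw [e2] at hh
    exact ((contDiffOn_succ_iff_deriv_of_isOpen isOpen_Ioi).1 hh).2.2
  have hdiff2 : DifferentiableOn ℝ (deriv h) (Set.Ioi 0) := hh2.differentiableOn (by norm_num)
  have hd1 : ∀ s, 0 < s → HasDerivAt h (deriv h s) s := fun s hs =>
    (hdiff1.differentiableAt (isOpen_Ioi.mem_nhds hs)).hasDerivAt
  have hd2 : ∀ s, 0 < s → HasDerivAt (deriv h) (deriv (deriv h) s) s := fun s hs =>
    (hdiff2.differentiableAt (isOpen_Ioi.mem_nhds hs)).hasDerivAt
  -- first integration: w(s) = s^(-l₂) (s h' - l₁ h) is constant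
  set K : ℝ := deriv h 1 - l₁ with hKdef
  clear_value K
  have hw : ∀ s ∈ Set.Ioi (0:ℝ),
      HasDerivAt (fun x => x ^ (-l₂) * (x * deriv h x - l₁ * h x)) 0 s := by
    intro s hs
    rw [Set.mem_Ioi] at hs
    have hA : HasDerivAt (fun x : ℝ => x ^ (-l₂)) (-l₂ * s ^ (-l₂ - 1)) s :=
      Real.hasDerivAt_rpow_const (Or.inl (ne_of_gt hs))
    have hB : HasDerivAt (fun x => x * deriv h x - l₁ * h x)
        (1 * deriv h s + s * deriv (deriv h) s - l₁ * deriv h s) s :=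
      ((hasDerivAt_id s).mul (hd2 s hs)).sub ((hd1 s hs).const_mul l₁)
    have := hA.mul hB
    convert this using 1
    case e'_4 => exact rfl
    case e'_5 => exact rfl
    case e'_8 => exact rfl
    have hpow : s ^ (-l₂ - 1) * s = s ^ (-l₂) := by
      rw [← Real.rpow_add_one (ne_of_gt hs) (-l₂ - 1)]
      congr 1; ring
    rw [← hpow]
    linear_combination (-(s ^ (-l₂ - 1))) * keyode s hs
  have hwconst : ∀ s, 0 < s → s ^ (-l₂) * (s * deriv h s - l₁ * h s) = K := by
    intro s hs
    have := stmt8_const_on_Ioi hw (Set.mem_Ioi.2 hs)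
    simp only [Real.one_rpow, one_mul, h1, mul_one] at this
    rw [this, hKdef]
  have hK : ∀ s, 0 < s → s * deriv h s - l₁ * h s = K * s ^ l₂ := by
    intro s hs
    have h2 := hwconst s hs
    have hmul : s ^ (-l₂) * s ^ l₂ = 1 := by
      rw [← Real.rpow_add hs]; simp
    have : s * deriv h s - l₁ * h s
        = (s ^ (-l₂) * (s * deriv h s - l₁ * h s)) * s ^ l₂ := by
      rw [mul_comm (s ^ (-l₂)) _, mul_assoc, hmul, mul_one]
    rw [this, h2]
  -- second integration: v(s) = s^(-l₁) h - K/(l₂-l₁) s^(l₂-l₁) is constant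
  have hv : ∀ s ∈ Set.Ioi (0:ℝ),
      HasDerivAt (fun x => x ^ (-l₁) * h x - K/(l₂ - l₁) * x ^ (l₂ - l₁)) 0 s := by
    intro s hs
    rw [Set.mem_Ioi] at hs
    have hA : HasDerivAt (fun x : ℝ => x ^ (-l₁)) (-l₁ * s ^ (-l₁ - 1)) s :=
      Real.hasDerivAt_rpow_const (Or.inl (ne_of_gt hs))
    have hC : HasDerivAt (fun x : ℝ => x ^ (l₂ - l₁)) ((l₂ - l₁) * s ^ (l₂ - l₁ - 1)) s :=
      Real.hasDerivAt_rpow_const (Or.inl (ne_of_gt hs))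
    have := (hA.mul (hd1 s hs)).sub (hC.const_mul (K/(l₂ - l₁)))
    convert this using 1
    case e'_4 => exact rfl
    case e'_5 => exact rfl
    case e'_8 => exact rfl
    have e1 : s ^ (-l₁ - 1) * s = s ^ (-l₁) := by
      rw [← Real.rpow_add_one (ne_of_gt hs) (-l₁ - 1)]
      congr 1; ring
    have e2 : K/(l₂ - l₁) * ((l₂ - l₁) * s ^ (l₂ - l₁ - 1)) = K * s ^ (l₂ - l₁ - 1) := by
      field_simp
    have e4 : s ^ (-l₁ - 1) * s ^ l₂ = s ^ (l₂ - l₁ - 1) := by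
      rw [← Real.rpow_add hs]; ring_nf
    rw [← e1, e2]
    linear_combination (-(s ^ (-l₁ - 1))) * hK s hs + (-K) * e4
  have hvconst : ∀ s, 0 < s →
      s ^ (-l₁) * h s - K/(l₂ - l₁) * s ^ (l₂ - l₁) = 1 - K/(l₂ - l₁) := by
    intro s hs
    have := stmt8_const_on_Ioi hv (Set.mem_Ioi.2 hs)
    simp only [Real.one_rpow, one_mul, h1, mul_one] at this
    rw [this]
  set c : ℝ := 1 - K/(l₂ - l₁) with hcdef
  clear_value c
  have hrep : ∀ s > (0:ℝ), h s = c * s ^ l₁ + (1 - c) * s ^ l₂ := by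
    intro s hs
    have hv1 := hvconst s hs
    have m1 : s ^ l₁ * s ^ (-l₁) = 1 := by rw [← Real.rpow_add hs]; simp
    have m2 : s ^ l₁ * s ^ (l₂ - l₁) = s ^ l₂ := by rw [← Real.rpow_add hs]; ring_nf
    have hc1 : (1 : ℝ) - c = K/(l₂ - l₁) := by rw [hcdef]; ring
    calc h s = (s ^ l₁ * s ^ (-l₁)) * h s := by rw [m1, one_mul]
      _ = s ^ l₁ * (s ^ (-l₁) * h s - K/(l₂ - l₁) * s ^ (l₂ - l₁))
            + K/(l₂ - l₁) * (s ^ l₁ * s ^ (l₂ - l₁)) := by ring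
      _ = c * s ^ l₁ + K/(l₂ - l₁) * s ^ l₂ := by rw [hv1, m2]; ring
      _ = c * s ^ l₁ + (1 - c) * s ^ l₂ := by rw [hc1]
  -- positivity of the combination coefficient
  have hP : ∀ x > (0:ℝ), 0 < c + (1 - c) * x := by
    intro x hx
    set s : ℝ := x ^ (l₂ - l₁)⁻¹ with hsdef
    have hs : 0 < s := Real.rpow_pos_of_pos hx _
    have hx' : s ^ (l₂ - l₁) = x := by
      rw [hsdef, ← Real.rpow_mul hx.le, inv_mul_cancel₀ hΔ0, Real.rpow_one]
    have hhp := hpos s hs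
    rw [hrep s hs] at hhp
    have m2 : s ^ l₂ = s ^ l₁ * s ^ (l₂ - l₁) := by rw [← Real.rpow_add hs]; ring_nf
    rw [m2, hx'] at hhp
    have hsl : 0 < s ^ l₁ := Real.rpow_pos_of_pos hs _
    by_contra hneg
    push_neg at hneg
    nlinarith
  have hc0 : 0 ≤ c := by
    by_contra hc
    push_neg at hc
    have h1c : (0:ℝ) < 1 - c := by linarith
    have hx : 0 < -c/(2*(1 - c)) := div_pos (by linarith) (by linarith)
    have hPx := hP _ hx
    have e : c + (1 - c) * (-c/(2*(1 - c))) = c/2 := by field_simp; ring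
    rw [e] at hPx
    linarith
  have hc1 : c ≤ 1 := by
    by_contra hc
    push_neg at hc
    have hcpos : (0:ℝ) < c := by linarith
    have hc1' : (0:ℝ) < c - 1 := by linarith
    have hx : 0 < 2*c/(c - 1) := div_pos (by linarith) (by linarith)
    have hPx := hP _ hx
    have e : c + (1 - c) * (2*c/(c - 1)) = -c := by field_simp; ring
    rw [e] at hPx
    linarith
  exact ⟨c, ⟨hc0, hc1⟩, hrep⟩
end

section
/- For the Euler ODE (1/2)σ²s²h''(s) + (r−δ)s h'(s) − r h(s) = −λ h(s) on (0,∞), if λ > (1/2)(σ/2 − (r−δ)/σ)² + r, then there is no positive C² solution h on (0,∞). -/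
open Real

set_option maxHeartbeats 1000000 in
theorem stmt10 (σ r δ lam : ℝ) (hσ : 0 < σ)
    (hlam : lam > (1/2) * (σ/2 - (r - δ)/σ) ^ 2 + r) :
    ¬ ∃ h : ℝ → ℝ, ContDiffOn ℝ 2 h (Set.Ioi 0) ∧
      (∀ s > (0:ℝ), 0 < h s) ∧
      (∀ s > (0:ℝ),
        (1/2) * σ ^ 2 * s ^ 2 * deriv (deriv h) s + (r - δ) * s * deriv h s - r * h s
          = -lam * h s) := by
  rintro ⟨h, hC2, hpos, hode⟩
  have hσ0 : (σ:ℝ) ≠ 0 := ne_of_gt hσ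
  set B : ℝ := 2*(r-δ)/σ^2 with hBdef
  set C : ℝ := 2*(lam-r)/σ^2 with hCdef
  set b2 : ℝ := C - (1-B)^2/4 with hb2def
  have hb2 : 0 < b2 := by
    have h1 : 0 < lam - ((1/2) * (σ/2 - (r - δ)/σ) ^ 2 + r) := sub_pos.mpr hlam
    have h2 : b2 = 2*(lam - ((1/2) * (σ/2 - (r - δ)/σ) ^ 2 + r))/σ^2 := by
      rw [hb2def, hCdef, hBdef]; field_simp; ring
    rw [h2]; positivity
  -- differentiability facts
  have hd1 : ∀ s ∈ Set.Ioi (0:ℝ), HasDerivAt h (deriv h s) s := fun s hs =>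
    ((hC2.differentiableOn (by norm_num)).differentiableAt (isOpen_Ioi.mem_nhds hs)).hasDerivAt
  have hdo : DifferentiableOn ℝ (deriv h) (Set.Ioi 0) :=
    (hC2.deriv_of_isOpen isOpen_Ioi (m := 1) (by norm_num)).differentiableOn (by norm_num)
  have hd2 : ∀ s ∈ Set.Ioi (0:ℝ), HasDerivAt (deriv h) (deriv (deriv h) s) s := fun s hs =>
    (hdo.differentiableAt (isOpen_Ioi.mem_nhds hs)).hasDerivAt
  set z : ℝ → ℝ := fun s => s * deriv h s / h s with hzdef
  -- Riccati equation for z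
  have hz : ∀ s ∈ Set.Ioi (0:ℝ), HasDerivAt z (((1-B)*z s - C - (z s)^2)/s) s := by
    intro s hs
    have hs0 : (0:ℝ) < s := hs
    have hh : h s ≠ 0 := ne_of_gt (hpos s hs0)
    have h1 : HasDerivAt (fun t => t * deriv h t) (1 * deriv h s + s * deriv (deriv h) s) s :=
      (hasDerivAt_id s).mul (hd2 s hs)
    have h2 := h1.div (hd1 s hs) hh
    have hDD : deriv (deriv h) s = (2*((r - lam) * h s - (r-δ)*s*deriv h s))/(σ^2*s^2) := by
      have := hode s hs0
      field_simp
      linarith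
    refine h2.congr_deriv ?_
    simp only [hzdef, hDD, hBdef, hCdef]
    field_simp
    ring
  -- F = z + b2 log is antitone
  set F : ℝ → ℝ := fun s => z s + b2 * Real.log s with hFdef
  have hF : ∀ s ∈ Set.Ioi (0:ℝ),
      HasDerivAt F (((1-B)*z s - C - (z s)^2)/s + b2 * s⁻¹) s := fun s hs =>
    (hz s hs).add ((Real.hasDerivAt_log (ne_of_gt hs)).const_mul b2)
  have hFanti : AntitoneOn F (Set.Ioi 0) := by
    apply antitoneOn_of_deriv_nonpos (convex_Ioi 0)
    · intro s hs; exact (hF s hs).continuousAt.continuousWithinAt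
    · rw [isOpen_Ioi.interior_eq]
      intro s hs; exact (hF s hs).differentiableAt.differentiableWithinAt
    · rw [isOpen_Ioi.interior_eq]
      intro s hs
      have hs0 : (0:ℝ) < s := hs
      rw [(hF s hs).deriv]
      have key : (1-B)*z s - C - (z s)^2 + b2 ≤ 0 := by
        rw [hb2def]; nlinarith [sq_nonneg (z s - (1-B)/2)]
      have e : ((1-B)*z s - C - (z s)^2)/s + b2 * s⁻¹
          = ((1-B)*z s - C - (z s)^2 + b2)/s := by field_simp
      rw [e]
      exact div_nonpos_iff.mpr (Or.inr ⟨key, hs0.le⟩)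
  -- hence z s ≤ z 1 - b2 log s for s ≥ 1
  have hlog : ∀ s, 1 ≤ s → z s ≤ z 1 - b2 * Real.log s := by
    intro s h1s
    have hs0 : (0:ℝ) < s := lt_of_lt_of_le one_pos h1s
    have := hFanti (Set.mem_Ioi.mpr one_pos) (Set.mem_Ioi.mpr hs0) h1s
    simp only [hFdef, Real.log_one, mul_zero, add_zero] at this
    linarith
  set M : ℝ := 2*(|1-B| + |C|) + 2 with hMdef
  have hM : 0 < M := by positivity
  set s0 : ℝ := max 1 (Real.exp ((z 1 + M)/b2)) with hs0def
  have hs0ge1 : (1:ℝ) ≤ s0 := le_max_left _ _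
  have hs0pos : (0:ℝ) < s0 := lt_of_lt_of_le one_pos hs0ge1
  have hzM : ∀ s, s0 ≤ s → z s ≤ -M := by
    intro s hss0
    have h1s : (1:ℝ) ≤ s := le_trans hs0ge1 hss0
    have hs0' : (0:ℝ) < s := lt_of_lt_of_le one_pos h1s
    have hle : Real.exp ((z 1 + M)/b2) ≤ s := le_trans (le_max_right _ _) hss0
    have hlog2 : (z 1 + M)/b2 ≤ Real.log s := (Real.le_log_iff_exp_le hs0').mpr hle
    have h3 := hlog s h1s
    have h4 : b2 * ((z 1 + M)/b2) ≤ b2 * Real.log s :=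
      mul_le_mul_of_nonneg_left hlog2 hb2.le
    have h5 : b2 * ((z 1 + M)/b2) = z 1 + M := by field_simp
    have h6 : z 1 + M ≤ b2 * Real.log s := by rw [← h5]; exact h4
    linarith [h3, h6]
  have hzneg : ∀ s, s0 ≤ s → z s < 0 := fun s hs => lt_of_le_of_lt (hzM s hs) (by linarith)
  -- G = -1/z + (1/2) log is antitone on [s0, ∞)
  set G : ℝ → ℝ := fun s => -(z s)⁻¹ + (1/2) * Real.log s with hGdef
  have hG : ∀ s, s0 ≤ s → HasDerivAt G
      (-(-(((1-B)*z s - C - (z s)^2)/s) / (z s)^2) + (1/2) * s⁻¹) s := by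
    intro s hss0
    have hs0' : (0:ℝ) < s := lt_of_lt_of_le hs0pos hss0
    have hzne : z s ≠ 0 := ne_of_lt (hzneg s hss0)
    exact ((hz s (Set.mem_Ioi.mpr hs0')).inv hzne).neg.add
      ((Real.hasDerivAt_log (ne_of_gt hs0')).const_mul (1/2))
  have hGanti : AntitoneOn G (Set.Ici s0) := by
    apply antitoneOn_of_deriv_nonpos (convex_Ici s0)
    · intro s hs; exact (hG s hs).continuousAt.continuousWithinAt
    · rw [interior_Ici]
      intro s hs; exact (hG s (le_of_lt hs)).differentiableAt.differentiableWithinAt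
    · rw [interior_Ici]
      intro s hs
      have hss0 : s0 ≤ s := le_of_lt hs
      have hs0' : (0:ℝ) < s := lt_of_lt_of_le hs0pos hss0
      have hzs := hzM s hss0
      have hzne : z s ≠ 0 := ne_of_lt (hzneg s hss0)
      rw [(hG s hss0).deriv]
      -- numerator bound : (1-B) z - C - z^2 ≤ - z^2/2
      have key : (1-B)*z s - C - (z s)^2 ≤ -(z s)^2/2 := by
        have h1 : (1-B) ≤ |1-B| := le_abs_self _
        have h2 : -|1-B| ≤ (1-B) := neg_abs_le _
        have h3 : C ≤ |C| := le_abs_self _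
        have h4 : -|C| ≤ C := neg_abs_le _
        have h5 : 0 ≤ |1-B| := abs_nonneg _
        have h6 : 0 ≤ |C| := abs_nonneg _
        have hzM' : z s ≤ -(2*(|1-B| + |C|) + 2) := by rw [hMdef] at hzs; exact hzs
        nlinarith [mul_nonneg h5 (neg_nonneg.mpr (le_of_lt (hzneg s hss0))),
          sq_nonneg (z s), mul_le_mul_of_nonneg_left hzM' h5,
          mul_le_mul_of_nonneg_left hzM' h6]
      have hz2 : (0:ℝ) < (z s)^2 := by positivity
      have e : -(-((((1-B)*z s - C - (z s)^2))/s) / (z s)^2) + (1/2) * s⁻¹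
          = (2*((1-B)*z s - C - (z s)^2) + (z s)^2)/(2*s*(z s)^2) := by
        field_simp
      rw [e]
      exact div_nonpos_iff.mpr (Or.inr ⟨by linarith, by positivity⟩)
  -- final contradiction
  set y0 : ℝ := -(z s0)⁻¹ with hy0def
  have hy0 : 0 < y0 := by
    rw [hy0def]
    have := hzneg s0 le_rfl
    simp only [neg_pos]
    exact inv_lt_zero.mpr this
  set s1 : ℝ := s0 * Real.exp (2*y0 + 2) with hs1def
  have hs1 : s0 ≤ s1 := by
    rw [hs1def]
    nlinarith [Real.one_le_exp (by linarith : (0:ℝ) ≤ 2*y0 + 2), hs0pos]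
  have hGle : G s1 ≤ G s0 := hGanti (Set.mem_Ici.mpr le_rfl) (Set.mem_Ici.mpr hs1) hs1
  have hlog1 : Real.log s1 = Real.log s0 + (2*y0 + 2) := by
    rw [hs1def, Real.log_mul (ne_of_gt hs0pos) (Real.exp_ne_zero _), Real.log_exp]
  have hzs1 : z s1 < 0 := hzneg s1 hs1
  have hpos1 : 0 < -(z s1)⁻¹ := by
    simp only [neg_pos]
    exact inv_lt_zero.mpr hzs1
  simp only [hGdef, hlog1] at hGle
  linarith [hpos1, hGle]
end
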